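/- Let Q be a generator matrix on Fin N, let k⋆ : Fin N, and let q⋆ > 0 and q̄ > 0 satisfy Q i k⋆ ≥ q⋆ for every i ≠ k⋆ and ∑_{j ≠ i} Q i j ≤ q̄ for every i. Then every entry of row k⋆ of the matrix exponential exp((1/q⋆) • Qᵀ) is at least exp(−q̄/q⋆): for every j, (exp((1/q⋆) • Qᵀ)) k⋆ j ≥ exp(−q̄/q⋆). -/

import Mathlib

open Matrix

/-- A generator (transition-rate) matrix: nonnegative off-diagonal entries and zero row sums. -/
def IsGenerator {N : ℕ} (Q : Matrix (Fin N) (Fin N) ℝ) : Prop :=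
  (∀ i j, i ≠ j → 0 ≤ Q i j) ∧ (∀ i, ∑ j, Q i j = 0)

lemma entry_exp_ge {N : ℕ} (M : Matrix (Fin N) (Fin N) ℝ) (hM : ∀ i j, 0 ≤ M i j) (i j : Fin N) :
    (1 : Matrix (Fin N) (Fin N) ℝ) i j + M i j ≤ NormedSpace.exp M i j := by
  letI : SeminormedRing (Matrix (Fin N) (Fin N) ℝ) := Matrix.linftyOpSemiNormedRing
  letI : NormedRing (Matrix (Fin N) (Fin N) ℝ) := Matrix.linftyOpNormedRing
  letI : NormedAlgebra ℝ (Matrix (Fin N) (Fin N) ℝ) := Matrix.linftyOpNormedAlgebra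
  have hs : Summable (fun n : ℕ => (n.factorial : ℝ)⁻¹ • M ^ n) :=
    NormedSpace.expSeries_summable' M
  have hpow : ∀ n : ℕ, ∀ a b, 0 ≤ (M ^ n) a b := by
    intro n
    induction n with
    | zero =>
      intro a b
      rw [pow_zero]
      rcases eq_or_ne a b with h | h <;> simp [Matrix.one_apply, h]
    | succ n ih =>
      intro a b
      rw [pow_succ, Matrix.mul_apply]
      exact Finset.sum_nonneg fun k _ => mul_nonneg (ih a k) (hM k b)
  let φ : Matrix (Fin N) (Fin N) ℝ →ₗ[ℝ] ℝ :=
    { toFun := fun A => A i j, map_add' := fun _ _ => rfl, map_smul' := fun _ _ => rfl }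
  let φc : Matrix (Fin N) (Fin N) ℝ →L[ℝ] ℝ := φ.toContinuousLinearMap
  have key : NormedSpace.exp M i j = ∑' n : ℕ, (n.factorial : ℝ)⁻¹ * (M ^ n) i j := by
    rw [NormedSpace.exp_eq_tsum ℝ]
    have := φc.map_tsum hs
    exact this
  rw [key]
  have hsum : Summable (fun n : ℕ => (n.factorial : ℝ)⁻¹ * (M ^ n) i j) := by
    have := hs.map φc.toLinearMap.toAddMonoidHom φc.continuous
    exact this
  have := hsum.sum_le_tsum (Finset.range 2)
    (fun n _ => mul_nonneg (by positivity) (hpow n i j))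
  calc (1 : Matrix (Fin N) (Fin N) ℝ) i j + M i j
      = ∑ n ∈ Finset.range 2, (n.factorial : ℝ)⁻¹ * (M ^ n) i j := by
        simp [Finset.sum_range_succ]
    _ ≤ _ := this

theorem minorization_exp_row_bound {N : ℕ} (hN : 1 ≤ N)
    (Q : Matrix (Fin N) (Fin N) ℝ) (hQ : IsGenerator Q)
    (kstar : Fin N) (qstar qbar : ℝ) (hqstar : 0 < qstar) (hqbar : 0 < qbar)
    (hmin : ∀ i, i ≠ kstar → qstar ≤ Q i kstar)
    (hrate : ∀ i, ∑ j ∈ Finset.univ.erase i, Q i j ≤ qbar) :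
    ∀ j, Real.exp (-qbar / qstar) ≤ NormedSpace.exp ((1 / qstar) • Qᵀ) kstar j := by
  intro j
  set c : ℝ := qbar / qstar with hc
  have hcpos : 0 < c := div_pos hqbar hqstar
  set A : Matrix (Fin N) (Fin N) ℝ := (1 / qstar) • Q with hA
  set B : Matrix (Fin N) (Fin N) ℝ := A + c • 1 with hB
  -- diagonal entries of Q are ≥ -qbar
  have hdiag : ∀ i, -qbar ≤ Q i i := by
    intro i
    have h1 : Q i i + ∑ k ∈ Finset.univ.erase i, Q i k = ∑ k, Q i k :=
      Finset.add_sum_erase _ _ (Finset.mem_univ i)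
    have h2 := hQ.2 i
    have := hrate i
    linarith
  have hBnonneg : ∀ a b, 0 ≤ B a b := by
    intro a b
    rcases eq_or_ne a b with rfl | hne
    · have h1 : (0:ℝ) ≤ 1 / qstar := by positivity
      have h2 : (1 / qstar) * (-qbar) ≤ (1 / qstar) * Q a a :=
        mul_le_mul_of_nonneg_left (hdiag a) h1
      have : -(c) ≤ (1 / qstar) * Q a a := by
        rw [hc]
        calc -(qbar / qstar) = (1 / qstar) * (-qbar) := by ring
          _ ≤ _ := h2
      simp only [hB, Matrix.add_apply, Matrix.smul_apply, hA, Matrix.one_apply_eq,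
        smul_eq_mul, mul_one]
      linarith
    · have h0 : 0 ≤ Q a b := hQ.1 a b hne
      simp only [hB, Matrix.add_apply, Matrix.smul_apply, hA, Matrix.one_apply_ne hne,
        smul_eq_mul, mul_zero, add_zero]
      positivity
  -- exp of the scalar part
  have hcomm : Commute B ((-c) • (1 : Matrix (Fin N) (Fin N) ℝ)) :=
    (Commute.one_right B).smul_right (-c)
  have h0 : B + (-c) • 1 = (1 / qstar) • Q := by
    rw [hB, hA]; module
  have hsplit : (1 / qstar) • Qᵀ = (B + (-c) • 1)ᵀ := by
    rw [h0, Matrix.transpose_smul]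
  rw [hsplit, Matrix.exp_transpose, Matrix.exp_add_of_commute B _ hcomm]
  have hscal : NormedSpace.exp ((-c) • (1 : Matrix (Fin N) (Fin N) ℝ))
      = Real.exp (-c) • (1 : Matrix (Fin N) (Fin N) ℝ) := by
    letI : SeminormedRing (Matrix (Fin N) (Fin N) ℝ) := Matrix.linftyOpSemiNormedRing
    letI : NormedRing (Matrix (Fin N) (Fin N) ℝ) := Matrix.linftyOpNormedRing
    letI : NormedAlgebra ℝ (Matrix (Fin N) (Fin N) ℝ) := Matrix.linftyOpNormedAlgebra
    have : ((-c) • (1 : Matrix (Fin N) (Fin N) ℝ)) = algebraMap ℝ _ (-c) := by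
      simp [Algebra.algebraMap_eq_smul_one]
    rw [this]
    erw [← NormedSpace.algebraMap_exp_comm]
    rw [Algebra.algebraMap_eq_smul_one, Real.exp_eq_exp_ℝ]
  rw [hscal]
  have hentry : (NormedSpace.exp B * (Real.exp (-c) • 1))ᵀ kstar j
      = Real.exp (-c) * (NormedSpace.exp B) j kstar := by
    simp [Matrix.transpose_apply, Matrix.mul_smul, Matrix.mul_one, Matrix.smul_apply,
      smul_eq_mul]
  rw [hentry, neg_div, ← hc]
  have hone : (1 : ℝ) ≤ (NormedSpace.exp B) j kstar := by
    have key := entry_exp_ge B hBnonneg j kstar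
    rcases eq_or_ne j kstar with rfl | hne
    · have : (1 : Matrix (Fin N) (Fin N) ℝ) j j = 1 := Matrix.one_apply_eq j
      have hb := hBnonneg j j
      linarith [key, hb, this.ge, this.le]
    · have h1 : (1 : Matrix (Fin N) (Fin N) ℝ) j kstar = 0 := Matrix.one_apply_ne hne
      have hb : 1 ≤ B j kstar := by
        have hq : qstar ≤ Q j kstar := hmin j hne
        simp only [hB, Matrix.add_apply, Matrix.smul_apply, hA, Matrix.one_apply_ne hne,
          smul_eq_mul, mul_zero, add_zero]
        rw [div_mul_eq_mul_div, one_mul, le_div_iff₀ hqstar, one_mul]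
        exact hq
      linarith [key]
  calc Real.exp (-c) = Real.exp (-c) * 1 := by ring
    _ ≤ Real.exp (-c) * (NormedSpace.exp B) j kstar := by
        exact mul_le_mul_of_nonneg_left hone (Real.exp_nonneg _)
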